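/- Every maximal outerplanar graph O with vertices 1,…,n in clockwise order around the outer cycle and positive weight function w admits a proportional rectangle-contact representation in the plane in which the rectangle for each vertex v has area w(v), the rectangle R₁ for vertex 1 is leftmost, the rectangle R_n for vertex n is bottommost among the others, and the top-right corner of every rectangle lies on the outer boundary of the representation un-shared with any other rectangle (is exposed). -/

import Mathlib

/-- Maximal outerplanar graph on `Fin n` with outer (Hamiltonian) cycle `0,1,...,n-1`:
it contains all cycle edges, its chords are pairwise non-crossing, and it has the
maximal number `2n-3` of edges. -/
def MaxOuterplanar (n : ℕ) (G : SimpleGraph (Fin n)) : Prop :=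
  (∀ i : Fin n, ∀ _ : 1 < n, G.Adj i ⟨((i : ℕ) + 1) % n, Nat.mod_lt _ (by omega)⟩) ∧
  (∀ a b c d : Fin n, G.Adj a b → G.Adj c d → ¬(a < c ∧ c < b ∧ b < d)) ∧
  G.edgeSet.ncard = 2 * n - 3


/-- An axis-aligned rectangle in the plane. -/
structure Rect where
  xlo : ℝ
  xhi : ℝ
  ylo : ℝ
  yhi : ℝ
  hx : xlo < xhi
  hy : ylo < yhi

def Rect.toSet (R : Rect) : Set (ℝ × ℝ) :=
  {p | R.xlo ≤ p.1 ∧ p.1 ≤ R.xhi ∧ R.ylo ≤ p.2 ∧ p.2 ≤ R.yhi}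

def Rect.interior (R : Rect) : Set (ℝ × ℝ) :=
  {p | R.xlo < p.1 ∧ p.1 < R.xhi ∧ R.ylo < p.2 ∧ p.2 < R.yhi}

def Rect.area (R : Rect) : ℝ := (R.xhi - R.xlo) * (R.yhi - R.ylo)

def Rect.IsSquare (R : Rect) : Prop := R.xhi - R.xlo = R.yhi - R.ylo

/-- Two rectangles share a boundary segment of positive length. -/
def Rect.Contact (R S : Rect) : Prop :=
  ((R.xhi = S.xlo ∨ S.xhi = R.xlo) ∧ max R.ylo S.ylo < min R.yhi S.yhi) ∨
  ((R.yhi = S.ylo ∨ S.yhi = R.ylo) ∧ max R.xlo S.xlo < min R.xhi S.xhi)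

-- Key counting lemma for noncrossing interval families.
theorem interval_key : ∀ d : ℕ, ∀ u : ℕ, ∀ F : Finset (ℕ × ℕ),
    (∀ p ∈ F, u ≤ p.1 ∧ p.1 < p.2 ∧ p.2 ≤ u + d) →
    (∀ p ∈ F, ∀ q ∈ F, ¬(p.1 < q.1 ∧ q.1 < p.2 ∧ p.2 < q.2)) →
    1 ≤ d →
    F.card ≤ 2 * d - 1 ∧
    (F.card = 2 * d - 1 →
      ((u, u + d) ∈ F ∧
        ∀ p ∈ F, p.1 + 2 ≤ p.2 →
          ∃ k, p.1 < k ∧ k < p.2 ∧ (p.1, k) ∈ F ∧ (k, p.2) ∈ F)) := by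
  intro d
  induction d using Nat.strong_induction_on with
  | _ d IH =>
  intro u F hmem hnc hd
  classical
  by_cases hA : ∃ a, u < a ∧ (a, u + d) ∈ F
  · -- s := minimal such a
    obtain ⟨a0, ha0u, ha0F⟩ := hA
    set A : Finset ℕ := F.image Prod.fst |>.filter (fun a => u < a ∧ (a, u + d) ∈ F) with hA_def
    have hA0 : a0 ∈ A :=
      Finset.mem_filter.2 ⟨Finset.mem_image.2 ⟨(a0, u+d), ha0F, rfl⟩, ha0u, ha0F⟩
    have hAne : A.Nonempty := ⟨a0, hA0⟩
    set s := A.min' hAne with hs_def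
    have hsA : s ∈ A := A.min'_mem hAne
    obtain ⟨hsu1, hsuF⟩ : u < s ∧ (s, u + d) ∈ F := (Finset.mem_filter.1 hsA).2
    have hs_min : ∀ a, u < a → (a, u + d) ∈ F → s ≤ a := by
      intro a h1 h2
      exact A.min'_le _ (Finset.mem_filter.2 ⟨Finset.mem_image.2 ⟨(a, u+d), h2, rfl⟩, h1, h2⟩)
    have hsd : s < u + d := (hmem _ hsuF).2.1
    -- cover
    set F1 := F.filter (fun p => p.2 ≤ s) with hF1
    set F2 := F.filter (fun p => s ≤ p.1) with hF2
    have hcover : ∀ p ∈ F, p ≠ (u, u + d) → p ∈ F1 ∨ p ∈ F2 := by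
      intro p hp hne
      obtain ⟨h1, h2, h3⟩ := hmem p hp
      by_cases hp2 : p.2 = u + d
      · right
        rcases Nat.lt_or_ge p.1 s with h | h
        · exfalso
          rcases Nat.eq_or_lt_of_le h1 with h1' | h1'
          · exact hne (by rw [Prod.ext_iff]; exact ⟨h1'.symm, hp2⟩)
          · exact absurd (hs_min p.1 h1' (by rw [← hp2]; exact hp)) (by omega)
        · simp [hF2, Finset.mem_filter, hp, h]
      · rcases Nat.lt_or_ge p.1 s with h | h
        · left
          rcases Nat.lt_or_ge s p.2 with h' | h'
          · exact absurd ⟨h, h', by omega⟩ (hnc p hp (s, u+d) hsuF)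
          · simp [hF1, Finset.mem_filter, hp, h']
        · right; simp [hF2, Finset.mem_filter, hp, h]
    have hd1 : 1 ≤ s - u := by omega
    have hd2 : 1 ≤ (u + d) - s := by omega
    have hlt1 : s - u < d := by omega
    have hlt2 : (u + d) - s < d := by omega
    have hmem1 : ∀ p ∈ F1, u ≤ p.1 ∧ p.1 < p.2 ∧ p.2 ≤ u + (s - u) := by
      intro p hp
      have := Finset.mem_filter.1 hp
      obtain ⟨h1, h2, h3⟩ := hmem p this.1
      exact ⟨h1, h2, by omega⟩
    have hmem2 : ∀ p ∈ F2, s ≤ p.1 ∧ p.1 < p.2 ∧ p.2 ≤ s + ((u + d) - s) := by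
      intro p hp
      have := Finset.mem_filter.1 hp
      obtain ⟨h1, h2, h3⟩ := hmem p this.1
      exact ⟨this.2, h2, by omega⟩
    have hnc1 : ∀ p ∈ F1, ∀ q ∈ F1, ¬(p.1 < q.1 ∧ q.1 < p.2 ∧ p.2 < q.2) := by
      intro p hp q hq
      exact hnc p (Finset.mem_filter.1 hp).1 q (Finset.mem_filter.1 hq).1
    have hnc2 : ∀ p ∈ F2, ∀ q ∈ F2, ¬(p.1 < q.1 ∧ q.1 < p.2 ∧ p.2 < q.2) := by
      intro p hp q hq
      exact hnc p (Finset.mem_filter.1 hp).1 q (Finset.mem_filter.1 hq).1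
    obtain ⟨hb1, hf1⟩ := IH (s - u) hlt1 u F1 hmem1 hnc1 hd1
    obtain ⟨hb2, hf2⟩ := IH ((u + d) - s) hlt2 s F2 hmem2 hnc2 hd2
    have hdisj : Disjoint F1 F2 := by
      rw [Finset.disjoint_left]
      intro p hp1 hp2
      have h1 := (Finset.mem_filter.1 hp1).2
      have h2 := (Finset.mem_filter.1 hp2).2
      have := (hmem p (Finset.mem_filter.1 hp1).1).2.1
      omega
    have hsub : F ⊆ insert (u, u + d) (F1 ∪ F2) := by
      intro p hp
      by_cases h : p = (u, u + d)
      · simp [h]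
      · rcases hcover p hp h with h' | h' <;> simp [Finset.mem_insert, Finset.mem_union, h']
    have hcard_le : F.card ≤ 1 + (F1.card + F2.card) := by
      have h1 := Finset.card_le_card hsub
      have h2 := Finset.card_insert_le (u, u + d) (F1 ∪ F2)
      have h3 := Finset.card_union_le F1 F2
      omega
    constructor
    · omega
    · intro hfull
      -- forced equalities
      have hmem_top : (u, u + d) ∈ F := by
        by_contra htop
        have : F ⊆ F1 ∪ F2 := by
          intro p hp
          rcases hcover p hp (by rintro rfl; exact htop hp) with h | h <;>
            simp [Finset.mem_union, h]
        have := Finset.card_le_card this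
        have := Finset.card_union_le F1 F2
        omega
      have htopn1 : (u, u + d) ∉ F1 := by
        simp [hF1, Finset.mem_filter]; omega
      have htopn2 : (u, u + d) ∉ F2 := by
        simp [hF2, Finset.mem_filter]; intro h; omega
      have hsub2 : F ⊆ insert (u, u+d) (F1 ∪ F2) := hsub
      have hsup : insert (u, u+d) (F1 ∪ F2) ⊆ F := by
        intro p hp
        rcases Finset.mem_insert.1 hp with h | h
        · rw [h]; exact hmem_top
        · rcases Finset.mem_union.1 h with h | h
          · exact (Finset.mem_filter.1 h).1
          · exact (Finset.mem_filter.1 h).1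
      have hFeq : F = insert (u, u+d) (F1 ∪ F2) := Finset.Subset.antisymm hsub2 hsup
      have hcard_eq : F.card = 1 + (F1.card + F2.card) := by
        rw [hFeq]
        rw [Finset.card_insert_of_notMem (by
          simp [Finset.mem_union]; exact ⟨fun h => htopn1 (by exact h), fun h => htopn2 (by exact h)⟩)]
        rw [Finset.card_union_of_disjoint hdisj]
        omega
      have he1 : F1.card = 2 * (s - u) - 1 := by omega
      have he2 : F2.card = 2 * ((u + d) - s) - 1 := by omega
      obtain ⟨ht1, hsp1⟩ := hf1 he1
      obtain ⟨ht2, hsp2⟩ := hf2 he2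
      refine ⟨hmem_top, ?_⟩
      intro p hp hgap
      by_cases h : p = (u, u + d)
      · subst h
        refine ⟨s, by simp; omega, by simp; omega, ?_, ?_⟩
        · have : (u, u + (s - u)) ∈ F1 := ht1
          have h' : u + (s - u) = s := by omega
          rw [h'] at this
          simpa using (Finset.mem_filter.1 this).1
        · have : (s, s + ((u + d) - s)) ∈ F2 := ht2
          have h' : s + ((u + d) - s) = u + d := by omega
          rw [h'] at this
          simpa using (Finset.mem_filter.1 this).1
      · rcases hcover p hp h with hmem' | hmem'
        · obtain ⟨k, hk1, hk2, hk3, hk4⟩ := hsp1 p hmem' hgap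
          exact ⟨k, hk1, hk2, (Finset.mem_filter.1 hk3).1, (Finset.mem_filter.1 hk4).1⟩
        · obtain ⟨k, hk1, hk2, hk3, hk4⟩ := hsp2 p hmem' hgap
          exact ⟨k, hk1, hk2, (Finset.mem_filter.1 hk3).1, (Finset.mem_filter.1 hk4).1⟩
  · -- no interval (a, u+d) with a > u: all proper intervals fit in [u, u+d-1]
    push_neg at hA
    rcases Nat.eq_or_lt_of_le hd with hd1 | hd2
    · -- d = 1
      have hFsub : F ⊆ {(u, u + d)} := by
        intro p hp
        obtain ⟨h1, h2, h3⟩ := hmem p hp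
        have : p.1 = u ∧ p.2 = u + d := by omega
        simp [Prod.ext_iff, this.1, this.2]
      have hcard : F.card ≤ 1 := by
        calc F.card ≤ ({(u, u+d)} : Finset (ℕ×ℕ)).card := Finset.card_le_card hFsub
          _ = 1 := Finset.card_singleton _
      constructor
      · omega
      · intro hfull
        have h1 : F.card = 1 := by omega
        have : (u, u+d) ∈ F := by
          obtain ⟨x, hx⟩ := Finset.card_eq_one.1 h1
          have hx2 := hFsub (by rw [hx]; exact Finset.mem_singleton_self x)
          rw [Finset.mem_singleton] at hx2
          rw [hx, hx2]; exact Finset.mem_singleton_self _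
        refine ⟨this, ?_⟩
        intro p hp hgap
        obtain ⟨h1', h2', h3'⟩ := hmem p hp
        omega
    · -- d ≥ 2, bound is strict
      set F1 := F.filter (fun p => p.2 ≤ u + (d - 1)) with hF1
      have hsub : F ⊆ insert (u, u + d) F1 := by
        intro p hp
        obtain ⟨h1, h2, h3⟩ := hmem p hp
        by_cases hp2 : p.2 = u + d
        · have hp1 : p.1 = u := by
            by_contra hne
            exact absurd hp (by
              have := hA p.1 (by omega)
              rw [← hp2] at this
              simpa using this)
          exact Finset.mem_insert.2 (Or.inl (by rw [Prod.ext_iff]; exact ⟨hp1, hp2⟩))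
        · exact Finset.mem_insert.2 (Or.inr (by simp [hF1, Finset.mem_filter, hp]; omega))
      have hmem1 : ∀ p ∈ F1, u ≤ p.1 ∧ p.1 < p.2 ∧ p.2 ≤ u + (d - 1) := by
        intro p hp
        have h := Finset.mem_filter.1 hp
        obtain ⟨h1, h2, h3⟩ := hmem p h.1
        exact ⟨h1, h2, h.2⟩
      have hnc1 : ∀ p ∈ F1, ∀ q ∈ F1, ¬(p.1 < q.1 ∧ q.1 < p.2 ∧ p.2 < q.2) := by
        intro p hp q hq
        exact hnc p (Finset.mem_filter.1 hp).1 q (Finset.mem_filter.1 hq).1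
      obtain ⟨hb1, _⟩ := IH (d - 1) (by omega) u F1 hmem1 hnc1 (by omega)
      have : F.card ≤ 1 + F1.card := by
        have h1 := Finset.card_le_card hsub
        have h2 := Finset.card_insert_le (u, u + d) F1
        omega
      constructor
      · omega
      · intro hfull; omega


theorem Rect.contact_comm {R S : Rect} : R.Contact S ↔ S.Contact R := by
  unfold Rect.Contact
  constructor <;> rintro (⟨h1, h2⟩ | ⟨h1, h2⟩)
  · exact Or.inl ⟨h1.symm, by rw [max_comm, min_comm]; exact h2⟩
  · exact Or.inr ⟨h1.symm, by rw [max_comm, min_comm]; exact h2⟩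
  · exact Or.inl ⟨h1.symm, by rw [max_comm, min_comm]; exact h2⟩
  · exact Or.inr ⟨h1.symm, by rw [max_comm, min_comm]; exact h2⟩

theorem Rect.disj_x {R S : Rect} (h : R.xhi ≤ S.xlo) :
    Disjoint R.interior S.interior := by
  rw [Set.disjoint_left]
  rintro ⟨x, y⟩ hp hq
  simp only [Rect.interior, Set.mem_setOf_eq] at hp hq
  obtain ⟨h1, h2, h3, h4⟩ := hp
  obtain ⟨g1, g2, g3, g4⟩ := hq
  linarith

theorem Rect.disj_y {R S : Rect} (h : R.yhi ≤ S.ylo) :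
    Disjoint R.interior S.interior := by
  rw [Set.disjoint_left]
  rintro ⟨x, y⟩ hp hq
  simp only [Rect.interior, Set.mem_setOf_eq] at hp hq
  obtain ⟨h1, h2, h3, h4⟩ := hp
  obtain ⟨g1, g2, g3, g4⟩ := hq
  linarith


theorem split_exists {n : ℕ} (hn : 3 ≤ n) (G : SimpleGraph (Fin n))
    (hG : MaxOuterplanar n G) :
    ∀ i j : Fin n, G.Adj i j → (i : ℕ) + 2 ≤ (j : ℕ) →
      ∃ k : Fin n, (i : ℕ) < (k : ℕ) ∧ (k : ℕ) < (j : ℕ) ∧ G.Adj i k ∧ G.Adj k j := by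
  classical
  set F' : Finset (Fin n × Fin n) :=
    Finset.univ.filter (fun p => p.1 < p.2 ∧ G.Adj p.1 p.2) with hF'
  set F : Finset (ℕ × ℕ) := F'.image (fun p => ((p.1 : ℕ), (p.2 : ℕ))) with hF
  have hmemF : ∀ a b : ℕ, (a, b) ∈ F ↔
      ∃ (h1 : a < n) (h2 : b < n), a < b ∧ G.Adj ⟨a, h1⟩ ⟨b, h2⟩ := by
    intro a b
    constructor
    · intro h
      obtain ⟨q, hq, heq⟩ := Finset.mem_image.1 h
      obtain ⟨hlt, hadj⟩ := (Finset.mem_filter.1 hq).2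
      injection heq with e1 e2
      subst e1; subst e2
      exact ⟨q.1.2, q.2.2, hlt, by convert hadj <;> exact Fin.ext rfl⟩
    · rintro ⟨h1, h2, hlt, hadj⟩
      apply Finset.mem_image.2
      exact ⟨(⟨a, h1⟩, ⟨b, h2⟩), Finset.mem_filter.2 ⟨Finset.mem_univ _, hlt, hadj⟩, rfl⟩
  have hcard' : F.card = F'.card := by
    apply Finset.card_image_of_injOn
    intro p _ q _ h
    obtain ⟨h1, h2⟩ := Prod.mk.injEq .. ▸ h
    exact Prod.ext (Fin.ext h1) (Fin.ext h2)
  have hcard'' : F'.card = G.edgeFinset.card := by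
    refine Finset.card_bij (s := F') (t := G.edgeFinset) (fun p _ => s(p.1, p.2)) ?_ ?_ ?_
    · intro p hp
      rw [SimpleGraph.mem_edgeFinset]
      exact (Finset.mem_filter.1 hp).2.2
    · intro p hp q hq h
      obtain ⟨hp1, _⟩ := (Finset.mem_filter.1 hp).2
      obtain ⟨hq1, _⟩ := (Finset.mem_filter.1 hq).2
      rw [Sym2.mk_eq_mk_iff] at h
      rcases h with h | h
      · exact h
      · rw [Prod.swap_prod_mk, Prod.mk.injEq] at h
        exfalso
        rw [h.1, h.2] at hp1
        exact absurd (hp1.trans hq1) (lt_irrefl _)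
    · intro e he
      rw [SimpleGraph.mem_edgeFinset] at he
      induction e with
      | _ x y =>
        rcases lt_trichotomy x y with h | h | h
        · exact ⟨(x, y), Finset.mem_filter.2 ⟨Finset.mem_univ _, h, he⟩, rfl⟩
        · exact absurd he (by rw [h]; exact G.irrefl)
        · refine ⟨(y, x), Finset.mem_filter.2 ⟨Finset.mem_univ _, h, he.symm⟩, ?_⟩
          exact Sym2.eq_swap
  have hcardE : G.edgeFinset.card = 2 * n - 3 := by
    simpa [Set.ncard_eq_toFinset_card', SimpleGraph.edgeFinset] using hG.2.2
  have hmemb : ∀ p ∈ F, 0 ≤ p.1 ∧ p.1 < p.2 ∧ p.2 ≤ 0 + (n - 1) := by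
    rintro ⟨a, b⟩ hp
    obtain ⟨h1, h2, hlt, _⟩ := (hmemF a b).1 hp
    exact ⟨Nat.zero_le _, hlt, by omega⟩
  have hnc : ∀ p ∈ F, ∀ q ∈ F, ¬(p.1 < q.1 ∧ q.1 < p.2 ∧ p.2 < q.2) := by
    rintro ⟨a, b⟩ hp ⟨c, d⟩ hq ⟨hh1, hh2, hh3⟩
    obtain ⟨ha, hb, _, hadj1⟩ := (hmemF a b).1 hp
    obtain ⟨hc, hd, _, hadj2⟩ := (hmemF c d).1 hq
    exact hG.2.1 ⟨a, ha⟩ ⟨b, hb⟩ ⟨c, hc⟩ ⟨d, hd⟩ hadj1 hadj2 ⟨hh1, hh2, hh3⟩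
  obtain ⟨_, hfull⟩ := interval_key (n - 1) 0 F hmemb hnc (by omega)
  have hcardF : F.card = 2 * (n - 1) - 1 := by
    rw [hcard', hcard'', hcardE]; omega
  obtain ⟨_, hsplit⟩ := hfull hcardF
  intro i j hadj hij
  have hpF : ((i : ℕ), (j : ℕ)) ∈ F :=
    (hmemF i j).2 ⟨i.2, j.2, hij.trans_lt' (by omega), by
      convert hadj <;> exact Fin.ext rfl⟩
  obtain ⟨k, hk1, hk2, hk3, hk4⟩ := hsplit _ hpF hij
  have hkn : k < n := lt_trans hk2 j.2
  obtain ⟨h1, h2, _, hadj1⟩ := (hmemF i k).1 hk3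
  obtain ⟨h1', h2', _, hadj2⟩ := (hmemF k j).1 hk4
  refine ⟨⟨k, hkn⟩, hk1, hk2, ?_, ?_⟩
  · convert hadj1 <;> exact Fin.ext rfl
  · convert hadj2 <;> exact Fin.ext rfl


theorem main_ind {n : ℕ} (hn : 3 ≤ n) (G : SimpleGraph (Fin n)) (hG : MaxOuterplanar n G)
    (w : Fin n → ℝ) (hw : ∀ v, 0 < w v) :
    ∀ d : ℕ, ∀ i j : Fin n, G.Adj i j → (j : ℕ) = (i : ℕ) + d →
    ∀ W : ℝ, 0 < W →
    ∃ H0 : ℝ, 0 < H0 ∧ ∀ H : ℝ, H0 ≤ H → ∀ a b : ℝ,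
    ∃ ρ : Fin n → Rect,
      (∀ v : Fin n, (i:ℕ) < (v:ℕ) → (v:ℕ) < (j:ℕ) → (ρ v).area = w v) ∧
      (∀ v : Fin n, (i:ℕ) < (v:ℕ) → (v:ℕ) < (j:ℕ) →
        a ≤ (ρ v).xlo ∧ (ρ v).xhi < a + W ∧ b ≤ (ρ v).ylo ∧ (ρ v).yhi < b + H) ∧
      (∀ u v : Fin n, (i:ℕ) < (u:ℕ) → (u:ℕ) < (j:ℕ) → (i:ℕ) < (v:ℕ) → (v:ℕ) < (j:ℕ) → u ≠ v →
        Disjoint (ρ u).interior (ρ v).interior) ∧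
      (∀ u v : Fin n, (i:ℕ) < (u:ℕ) → (u:ℕ) < (j:ℕ) → (i:ℕ) < (v:ℕ) → (v:ℕ) < (j:ℕ) → u ≠ v →
        (G.Adj u v ↔ Rect.Contact (ρ u) (ρ v))) ∧
      (∀ v : Fin n, (i:ℕ) < (v:ℕ) → (v:ℕ) < (j:ℕ) → (G.Adj i v ↔ (ρ v).xlo = a)) ∧
      (∀ v : Fin n, (i:ℕ) < (v:ℕ) → (v:ℕ) < (j:ℕ) → (G.Adj v j ↔ (ρ v).ylo = b)) ∧
      (∀ u v : Fin n, (i:ℕ) < (u:ℕ) → (u:ℕ) < (j:ℕ) → (i:ℕ) < (v:ℕ) → (v:ℕ) < (j:ℕ) → u ≠ v →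
        ((ρ v).xhi, (ρ v).yhi) ∉ (ρ u).toSet) := by
  intro d
  induction d using Nat.strong_induction_on with
  | _ d IHd =>
  intro i j hij hd W hW
  rcases Nat.lt_or_ge d 2 with hd2 | hd2
  · -- base: no interior vertices
    refine ⟨1, one_pos, ?_⟩
    intro H hH a b
    refine ⟨fun _ => ⟨0, 1, 0, 1, one_pos, one_pos⟩,
      fun v hv1 hv2 => absurd hv1 (by omega),
      fun v hv1 hv2 => absurd hv1 (by omega),
      fun u v h1 h2 _ _ _ => absurd h1 (by omega),
      fun u v h1 h2 _ _ _ => absurd h1 (by omega),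
      fun v hv1 hv2 => absurd hv1 (by omega),
      fun v hv1 hv2 => absurd hv1 (by omega),
      fun u v h1 h2 _ _ _ => absurd h1 (by omega)⟩
  · -- step
    have flt : ∀ {x y : Fin n}, (x:ℕ) < (y:ℕ) → x < y := fun {x y} h => Fin.lt_def.mpr h
    obtain ⟨k, hik, hkj, hAik, hAkj⟩ := split_exists hn G hG i j hij (by omega)
    obtain ⟨H0r, hH0r, IHr⟩ :=
      IHd ((j:ℕ) - (k:ℕ)) (by omega) k j hAkj (by omega) (W/2) (by positivity)
    set t := max H0r (2 * w k / W) with ht_def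
    have ht0 : 0 < t := lt_of_lt_of_le hH0r (le_max_left _ _)
    set s := w k / t with hs_def
    have hs0 : 0 < s := div_pos (hw k) ht0
    have hsW2 : s ≤ W / 2 := by
      rw [hs_def, div_le_iff₀ ht0]
      have h1 : 2 * w k / W ≤ t := le_max_right _ _
      rw [div_le_iff₀ hW] at h1
      nlinarith
    have hst : s * t = w k := div_mul_cancel₀ (w k) (ne_of_gt ht0)
    obtain ⟨H0l, hH0l, IHl⟩ :=
      IHd ((k:ℕ) - (i:ℕ)) (by omega) i k hAik (by omega) s hs0
    refine ⟨t + H0l, by linarith, ?_⟩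
    intro H hH a b
    obtain ⟨ρL, L1, L2, L3, L4, L5, L6, L7⟩ := IHl (H - t) (by linarith) a (b + t)
    obtain ⟨ρR, R1, R2, R3, R4, R5, R6, R7⟩ := IHr t (le_max_left _ _) (a + s) b
    set Rk : Rect := ⟨a, a + s, b, b + t, by linarith, by linarith⟩ with hRk
    set ρ : Fin n → Rect := fun v =>
      if (v:ℕ) < (k:ℕ) then ρL v else if (k:ℕ) < (v:ℕ) then ρR v else Rk with hρ
    have hρ1 : ∀ v : Fin n, (v:ℕ) < (k:ℕ) → ρ v = ρL v := by
      intro v h; simp only [hρ]; rw [if_pos h]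
    have hρ2 : ∀ v : Fin n, (k:ℕ) < (v:ℕ) → ρ v = ρR v := by
      intro v h; simp only [hρ]; rw [if_neg (by omega), if_pos h]
    have hρ3 : ρ k = Rk := by
      simp only [hρ]; rw [if_neg (by omega), if_neg (by omega)]
    have hK1 : Rk.xlo = a := rfl
    have hK2 : Rk.xhi = a + s := rfl
    have hK3 : Rk.ylo = b := rfl
    have hK4 : Rk.yhi = b + t := rfl
    -- bounds
    have BL : ∀ v : Fin n, (i:ℕ) < (v:ℕ) → (v:ℕ) < (k:ℕ) →
        a ≤ (ρL v).xlo ∧ (ρL v).xhi < a + s ∧ b + t ≤ (ρL v).ylo ∧ (ρL v).yhi < b + H := by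
      intro v h1 h2
      obtain ⟨c1, c2, c3, c4⟩ := L2 v h1 h2
      exact ⟨c1, c2, c3, by linarith⟩
    have BR : ∀ v : Fin n, (k:ℕ) < (v:ℕ) → (v:ℕ) < (j:ℕ) →
        a + s ≤ (ρR v).xlo ∧ (ρR v).xhi < a + W ∧ b ≤ (ρR v).ylo ∧ (ρR v).yhi < b + t := by
      intro v h1 h2
      obtain ⟨c1, c2, c3, c4⟩ := R2 v h1 h2
      exact ⟨c1, by linarith, c3, c4⟩
    -- adjacency helper facts
    have keyLR : ∀ u v : Fin n, (i:ℕ) < (u:ℕ) → (u:ℕ) < (k:ℕ) → (k:ℕ) < (v:ℕ) → (v:ℕ) < (j:ℕ) →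
        ¬G.Adj u v ∧ ¬Rect.Contact (ρL u) (ρR v) := by
      intro u v h1 h2 h3 h4
      obtain ⟨b1, b2, b3, b4⟩ := BL u h1 h2
      obtain ⟨c1, c2, c3, c4⟩ := BR v h3 h4
      have hxu := (ρL u).hx; have hyu := (ρL u).hy
      have hxv := (ρR v).hx; have hyv := (ρR v).hy
      have b2' := (L2 u h1 h2).2.1
      have c4' := (R2 v h3 h4).2.2.2
      constructor
      · intro hAdj
        exact hG.2.1 i k u v hAik hAdj ⟨flt h1, flt h2, flt h3⟩
      · rintro (⟨h5 | h5, h6⟩ | ⟨h5 | h5, h6⟩) <;> linarith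
    have keyLK : ∀ v : Fin n, (i:ℕ) < (v:ℕ) → (v:ℕ) < (k:ℕ) →
        (G.Adj v k ↔ Rect.Contact (ρL v) Rk) := by
      intro v h1 h2
      obtain ⟨b1, b2, b3, b4⟩ := BL v h1 h2
      have hxv := (ρL v).hx; have hyv := (ρL v).hy
      rw [L6 v h1 h2]
      constructor
      · intro he
        refine Or.inr ⟨Or.inr ?_, ?_⟩
        · exact he.symm
        · refine lt_min_iff.2 ⟨max_lt_iff.2 ⟨?_, ?_⟩, max_lt_iff.2 ⟨?_, ?_⟩⟩ <;>
            linarith [hK1, hK2, hK3, hK4]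
      · rintro (⟨h5 | h5, h6⟩ | ⟨h5 | h5, h6⟩)
        · linarith [hK1, h5]
        · linarith [hK2, h5]
        · linarith [hK3, h5]
        · rw [hK4] at h5; exact h5.symm
    have keyRK : ∀ v : Fin n, (k:ℕ) < (v:ℕ) → (v:ℕ) < (j:ℕ) →
        (G.Adj k v ↔ Rect.Contact Rk (ρR v)) := by
      intro v h1 h2
      obtain ⟨c1, c2, c3, c4⟩ := BR v h1 h2
      have hxv := (ρR v).hx; have hyv := (ρR v).hy
      rw [R5 v h1 h2]
      constructor
      · intro he
        refine Or.inl ⟨Or.inl ?_, ?_⟩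
        · rw [hK2, he]
        · refine lt_min_iff.2 ⟨max_lt_iff.2 ⟨?_, ?_⟩, max_lt_iff.2 ⟨?_, ?_⟩⟩ <;>
            linarith [hK3, hK4]
      · rintro (⟨h5 | h5, h6⟩ | ⟨h5 | h5, h6⟩)
        · rw [hK2] at h5; exact h5.symm
        · linarith [hK1, h5]
        · linarith [hK4, h5]
        · linarith [hK3, h5]
    refine ⟨ρ, ?_, ?_, ?_, ?_, ?_, ?_, ?_⟩
    · -- (1) areas
      intro v h1 h2
      rcases Nat.lt_trichotomy ((v:ℕ)) ((k:ℕ)) with hv | hv | hv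
      · rw [hρ1 v hv]; exact L1 v h1 hv
      · have hveq : v = k := Fin.ext hv
        subst hveq
        rw [hρ3]
        show (Rk.xhi - Rk.xlo) * (Rk.yhi - Rk.ylo) = w v
        rw [hK1, hK2, hK3, hK4]
        have : (a + s - a) * (b + t - b) = s * t := by ring
        rw [this]; exact hst
      · rw [hρ2 v hv]; exact R1 v hv h2
    · -- (2) bounds
      intro v h1 h2
      rcases Nat.lt_trichotomy ((v:ℕ)) ((k:ℕ)) with hv | hv | hv
      · obtain ⟨c1, c2, c3, c4⟩ := BL v h1 hv
        rw [hρ1 v hv]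
        exact ⟨c1, by linarith, by linarith, c4⟩
      · have hveq : v = k := Fin.ext hv
        subst hveq
        rw [hρ3]
        exact ⟨hK1.ge, by rw [hK2]; linarith, hK3.ge, by rw [hK4]; linarith⟩
      · obtain ⟨c1, c2, c3, c4⟩ := BR v hv h2
        rw [hρ2 v hv]
        exact ⟨by linarith, c2, c3, by linarith⟩
    · -- (3) disjoint interiors
      intro u v h1 h2 h3 h4 hne
      rcases Nat.lt_trichotomy ((u:ℕ)) ((k:ℕ)) with hu | hu | hu <;>
        rcases Nat.lt_trichotomy ((v:ℕ)) ((k:ℕ)) with hv | hv | hv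
      · rw [hρ1 u hu, hρ1 v hv]; exact L3 u v h1 hu h3 hv hne
      · have hveq : v = k := Fin.ext hv; subst hveq
        rw [hρ1 u hu, hρ3]
        exact (Rect.disj_y (by rw [hK4]; exact (BL u h1 hu).2.2.1)).symm
      · rw [hρ1 u hu, hρ2 v hv]
        exact Rect.disj_x (by linarith [(BL u h1 hu).2.1, (BR v hv h4).1])
      · have hueq : u = k := Fin.ext hu; subst hueq
        rw [hρ3, hρ1 v hv]
        exact Rect.disj_y (by rw [hK4]; exact (BL v h3 hv).2.2.1)
      · exact absurd (Fin.ext (hu.trans hv.symm)) hne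
      · have hueq : u = k := Fin.ext hu; subst hueq
        rw [hρ3, hρ2 v hv]
        exact Rect.disj_x (by rw [hK2]; exact (BR v hv h4).1)
      · rw [hρ2 u hu, hρ1 v hv]
        exact (Rect.disj_x (by linarith [(BL v h3 hv).2.1, (BR u hu h2).1])).symm
      · have hveq : v = k := Fin.ext hv; subst hveq
        rw [hρ2 u hu, hρ3]
        exact (Rect.disj_x (by rw [hK2]; exact (BR u hu h2).1)).symm
      · rw [hρ2 u hu, hρ2 v hv]; exact R3 u v hu h2 hv h4 hne
    · -- (4) adjacency iff contact
      intro u v h1 h2 h3 h4 hne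
      rcases Nat.lt_trichotomy ((u:ℕ)) ((k:ℕ)) with hu | hu | hu <;>
        rcases Nat.lt_trichotomy ((v:ℕ)) ((k:ℕ)) with hv | hv | hv
      · rw [hρ1 u hu, hρ1 v hv]; exact L4 u v h1 hu h3 hv hne
      · have hveq : v = k := Fin.ext hv; subst hveq
        rw [hρ1 u hu, hρ3]; exact keyLK u h1 hu
      · rw [hρ1 u hu, hρ2 v hv]
        exact iff_of_false (keyLR u v h1 hu hv h4).1 (keyLR u v h1 hu hv h4).2
      · have hueq : u = k := Fin.ext hu; subst hueq
        rw [hρ3, hρ1 v hv, SimpleGraph.adj_comm, Rect.contact_comm]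
        exact keyLK v h3 hv
      · exact absurd (Fin.ext (hu.trans hv.symm)) hne
      · have hueq : u = k := Fin.ext hu; subst hueq
        rw [hρ3, hρ2 v hv]; exact keyRK v hv h4
      · rw [hρ2 u hu, hρ1 v hv, SimpleGraph.adj_comm, Rect.contact_comm]
        exact iff_of_false (keyLR v u h3 hv hu h2).1 (keyLR v u h3 hv hu h2).2
      · have hveq : v = k := Fin.ext hv; subst hveq
        rw [hρ2 u hu, hρ3, SimpleGraph.adj_comm, Rect.contact_comm]
        exact keyRK u hu h2
      · rw [hρ2 u hu, hρ2 v hv]; exact R4 u v hu h2 hv h4 hne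
    · -- (5) left-contact characterization
      intro v h1 h2
      rcases Nat.lt_trichotomy ((v:ℕ)) ((k:ℕ)) with hv | hv | hv
      · rw [hρ1 v hv]; exact L5 v h1 hv
      · have hveq : v = k := Fin.ext hv; subst hveq
        rw [hρ3]; exact iff_of_true hAik hK1
      · rw [hρ2 v hv]
        refine iff_of_false ?_ ?_
        · intro h
          exact hG.2.1 i v k j h hAkj ⟨flt hik, flt hv, flt h2⟩
        · intro he
          linarith [(BR v hv h2).1]
    · -- (6) bottom-contact characterization
      intro v h1 h2
      rcases Nat.lt_trichotomy ((v:ℕ)) ((k:ℕ)) with hv | hv | hv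
      · rw [hρ1 v hv]
        refine iff_of_false ?_ ?_
        · intro h
          exact hG.2.1 i k v j hAik h ⟨flt h1, flt hv, flt hkj⟩
        · intro he
          linarith [(BL v h1 hv).2.2.1]
      · have hveq : v = k := Fin.ext hv; subst hveq
        rw [hρ3]; exact iff_of_true hAkj hK3
      · rw [hρ2 v hv]; exact R6 v hv h2
    · -- (7) corner exposure
      intro u v h1 h2 h3 h4 hne
      rcases Nat.lt_trichotomy ((u:ℕ)) ((k:ℕ)) with hu | hu | hu <;>
        rcases Nat.lt_trichotomy ((v:ℕ)) ((k:ℕ)) with hv | hv | hv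
      · rw [hρ1 u hu, hρ1 v hv]; exact L7 u v h1 hu h3 hv hne
      · have hveq : v = k := Fin.ext hv; subst hveq
        rw [hρ1 u hu, hρ3]
        intro hmem
        simp only [Rect.toSet, Set.mem_setOf_eq] at hmem
        obtain ⟨m1, m2, m3, m4⟩ := hmem
        linarith [hK2, (BL u h1 hu).2.1]
      · rw [hρ1 u hu, hρ2 v hv]
        intro hmem
        simp only [Rect.toSet, Set.mem_setOf_eq] at hmem
        obtain ⟨m1, m2, m3, m4⟩ := hmem
        linarith [(BL u h1 hu).2.2.1, (BR v hv h4).2.2.2, (ρR v).hy]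
      · have hueq : u = k := Fin.ext hu; subst hueq
        rw [hρ3, hρ1 v hv]
        intro hmem
        simp only [Rect.toSet, Set.mem_setOf_eq] at hmem
        obtain ⟨m1, m2, m3, m4⟩ := hmem
        linarith [hK4, (BL v h3 hv).2.2.1, (ρL v).hy]
      · exact absurd (Fin.ext (hu.trans hv.symm)) hne
      · have hueq : u = k := Fin.ext hu; subst hueq
        rw [hρ3, hρ2 v hv]
        intro hmem
        simp only [Rect.toSet, Set.mem_setOf_eq] at hmem
        obtain ⟨m1, m2, m3, m4⟩ := hmem
        linarith [hK2, (BR v hv h4).1, (ρR v).hx]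
      · rw [hρ2 u hu, hρ1 v hv]
        intro hmem
        simp only [Rect.toSet, Set.mem_setOf_eq] at hmem
        obtain ⟨m1, m2, m3, m4⟩ := hmem
        linarith [(BR u hu h2).1, (BL v h3 hv).2.1]
      · have hveq : v = k := Fin.ext hv; subst hveq
        rw [hρ2 u hu, hρ3]
        intro hmem
        simp only [Rect.toSet, Set.mem_setOf_eq] at hmem
        obtain ⟨m1, m2, m3, m4⟩ := hmem
        linarith [hK4, (BR u hu h2).2.2.2]
      · rw [hρ2 u hu, hρ2 v hv]; exact R7 u v hu h2 hv h4 hne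


/-- Every maximal outerplanar graph with outer cycle `0,…,n-1`
(clockwise) and positive weights admits a proportional rectangle-contact
representation in which the rectangle of each vertex `v` has area `w v`, the
rectangle of vertex `0` is leftmost, the rectangle of vertex `n-1` is bottommost
among the remaining ones, and the top-right corner of every rectangle is exposed
(it belongs to no other rectangle). -/
theorem staircase_layout_exists
    {n : ℕ} (hn : 3 ≤ n) (G : SimpleGraph (Fin n)) (hG : MaxOuterplanar n G)
    (w : Fin n → ℝ) (hw : ∀ v, 0 < w v) :
    ∃ ρ : Fin n → Rect,
      (∀ v, (ρ v).area = w v) ∧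
      (∀ u v, u ≠ v → Disjoint (ρ u).interior (ρ v).interior) ∧
      (∀ u v, u ≠ v → (G.Adj u v ↔ Rect.Contact (ρ u) (ρ v))) ∧
      (∀ v, (ρ ⟨0, by omega⟩).xlo ≤ (ρ v).xlo) ∧
      (∀ v, v ≠ ⟨0, by omega⟩ → (ρ ⟨n - 1, by omega⟩).ylo ≤ (ρ v).ylo) ∧
      (∀ v u, u ≠ v → ((ρ v).xhi, (ρ v).yhi) ∉ (ρ u).toSet) := by
  classical
  set i0 : Fin n := ⟨0, by omega⟩ with hi0
  set jn : Fin n := ⟨n - 1, by omega⟩ with hjn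
  have hA : G.Adj i0 jn := by
    have h0 := hG.1 jn (by omega)
    have he : (⟨(((jn : Fin n) : ℕ) + 1) % n, Nat.mod_lt _ (by omega)⟩ : Fin n) = i0 := by
      apply Fin.ext
      show (n - 1 + 1) % n = 0
      rw [show n - 1 + 1 = n by omega, Nat.mod_self]
    rw [he] at h0
    exact h0.symm
  obtain ⟨H0, hH0, P⟩ :=
    main_ind hn G hG w hw (n - 1) i0 jn hA (by show n - 1 = 0 + (n - 1); omega) 1 one_pos
  set y1 : ℝ := w jn with hy1_def
  have hy1 : 0 < y1 := hw jn
  set y0 : ℝ := y1 + H0 with hy0_def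
  have hy0 : 0 < y0 := by linarith
  set x1 : ℝ := w i0 / y0 with hx1_def
  have hx1 : 0 < x1 := div_pos (hw i0) hy0
  obtain ⟨ρm, M1, M2, M3, M4, M5, M6, M7⟩ := P H0 le_rfl x1 y1
  set R0 : Rect := ⟨0, x1, 0, y0, hx1, hy0⟩ with hR0
  set Rn : Rect := ⟨x1, x1 + 1, 0, y1, by linarith, hy1⟩ with hRn
  have hne0n : i0 ≠ jn := by
    intro h
    have := congrArg Fin.val h
    simp only [hi0, hjn] at this
    omega
  set ρ : Fin n → Rect := fun v => if v = i0 then R0 else if v = jn then Rn else ρm v with hρ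
  have hr0 : ρ i0 = R0 := by rw [hρ]; simp
  have hrn : ρ jn = Rn := by rw [hρ]; simp [Ne.symm hne0n]
  have hrm : ∀ v : Fin n, v ≠ i0 → v ≠ jn → ρ v = ρm v := by
    intro v h1 h2; rw [hρ]; simp [h1, h2]
  have hint : ∀ v : Fin n, v ≠ i0 → v ≠ jn → ((i0 : ℕ) < (v : ℕ) ∧ (v : ℕ) < (jn : ℕ)) := by
    intro v h1 h2
    have e1 : (v : ℕ) ≠ 0 := fun h => h1 (Fin.ext h)
    have e2 : (v : ℕ) ≠ n - 1 := fun h => h2 (Fin.ext h)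
    have := v.2
    constructor
    · show (0 : ℕ) < (v : ℕ); omega
    · show (v : ℕ) < n - 1; omega
  -- projection facts
  have h01 : R0.xlo = 0 := rfl
  have h02 : R0.xhi = x1 := rfl
  have h03 : R0.ylo = 0 := rfl
  have h04 : R0.yhi = y0 := rfl
  have hn1 : Rn.xlo = x1 := rfl
  have hn2 : Rn.xhi = x1 + 1 := rfl
  have hn3 : Rn.ylo = 0 := rfl
  have hn4 : Rn.yhi = y1 := rfl
  have Bm : ∀ v : Fin n, v ≠ i0 → v ≠ jn →
      x1 ≤ (ρm v).xlo ∧ (ρm v).xhi < x1 + 1 ∧ y1 ≤ (ρm v).ylo ∧ (ρm v).yhi < y0 := by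
    intro v h1 h2
    obtain ⟨e1, e2⟩ := hint v h1 h2
    obtain ⟨c1, c2, c3, c4⟩ := M2 v e1 e2
    exact ⟨c1, c2, c3, by linarith⟩
  -- contact characterizations at the two outer rectangles
  have key0 : ∀ v : Fin n, v ≠ i0 → v ≠ jn → (G.Adj i0 v ↔ Rect.Contact R0 (ρm v)) := by
    intro v h1 h2
    obtain ⟨e1, e2⟩ := hint v h1 h2
    obtain ⟨c1, c2, c3, c4⟩ := Bm v h1 h2
    have hxv := (ρm v).hx; have hyv := (ρm v).hy
    rw [M5 v e1 e2]
    constructor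
    · intro he
      refine Or.inl ⟨Or.inl ?_, ?_⟩
      · rw [h02, he]
      · refine lt_min_iff.2 ⟨max_lt_iff.2 ⟨?_, ?_⟩, max_lt_iff.2 ⟨?_, ?_⟩⟩ <;>
          linarith [h03, h04]
    · rintro (⟨h5 | h5, h6⟩ | ⟨h5 | h5, h6⟩)
      · rw [h02] at h5; exact h5.symm
      · linarith [h01, h5]
      · linarith [h04, h5]
      · linarith [h03, h5]
  have keyn : ∀ v : Fin n, v ≠ i0 → v ≠ jn → (G.Adj jn v ↔ Rect.Contact Rn (ρm v)) := by
    intro v h1 h2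
    obtain ⟨e1, e2⟩ := hint v h1 h2
    obtain ⟨c1, c2, c3, c4⟩ := Bm v h1 h2
    have hxv := (ρm v).hx; have hyv := (ρm v).hy
    rw [G.adj_comm, M6 v e1 e2]
    constructor
    · intro he
      refine Or.inr ⟨Or.inl ?_, ?_⟩
      · rw [hn4, he]
      · refine lt_min_iff.2 ⟨max_lt_iff.2 ⟨?_, ?_⟩, max_lt_iff.2 ⟨?_, ?_⟩⟩ <;>
          linarith [hn1, hn2]
    · rintro (⟨h5 | h5, h6⟩ | ⟨h5 | h5, h6⟩)
      · linarith [hn2, h5]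
      · linarith [hn1, h5]
      · rw [hn4] at h5; exact h5.symm
      · linarith [hn3, h5]
  have hC0n : Rect.Contact R0 Rn := by
    refine Or.inl ⟨Or.inl ?_, ?_⟩
    · rw [h02, hn1]
    · refine lt_min_iff.2 ⟨max_lt_iff.2 ⟨?_, ?_⟩, max_lt_iff.2 ⟨?_, ?_⟩⟩ <;>
        linarith [h03, h04, hn3, hn4]
  refine ⟨ρ, ?_, ?_, ?_, ?_, ?_, ?_⟩
  · -- areas
    intro v
    rcases eq_or_ne v i0 with rfl | hv0
    · rw [hr0]
      show (R0.xhi - R0.xlo) * (R0.yhi - R0.ylo) = w i0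
      rw [h01, h02, h03, h04]
      have : (x1 - 0) * (y0 - 0) = x1 * y0 := by ring
      rw [this, hx1_def, div_mul_cancel₀ _ (ne_of_gt hy0)]
    · rcases eq_or_ne v jn with rfl | hvn
      · rw [hrn]
        show (Rn.xhi - Rn.xlo) * (Rn.yhi - Rn.ylo) = w jn
        rw [hn1, hn2, hn3, hn4]
        ring_nf
        exact hy1_def
      · obtain ⟨e1, e2⟩ := hint v hv0 hvn
        rw [hrm v hv0 hvn]
        exact M1 v e1 e2
  · -- disjoint interiors
    intro u v hne
    rcases eq_or_ne u i0 with rfl | hu0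
    · rcases eq_or_ne v jn with rfl | hvn
      · rw [hr0, hrn]
        exact Rect.disj_x (by rw [h02, hn1])
      · rcases eq_or_ne v i0 with rfl | hv0
        · exact absurd rfl hne
        · rw [hr0, hrm v hv0 hvn]
          exact Rect.disj_x (by rw [h02]; exact (Bm v hv0 hvn).1)
    · rcases eq_or_ne u jn with rfl | hun
      · rcases eq_or_ne v i0 with rfl | hv0
        · rw [hr0, hrn]
          exact (Rect.disj_x (by rw [h02, hn1])).symm
        · rcases eq_or_ne v jn with rfl | hvn
          · exact absurd rfl hne
          · rw [hrn, hrm v hv0 hvn]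
            exact Rect.disj_y (by rw [hn4]; exact (Bm v hv0 hvn).2.2.1)
      · rcases eq_or_ne v i0 with rfl | hv0
        · rw [hr0, hrm u hu0 hun]
          exact (Rect.disj_x (by rw [h02]; exact (Bm u hu0 hun).1)).symm
        · rcases eq_or_ne v jn with rfl | hvn
          · rw [hrn, hrm u hu0 hun]
            exact (Rect.disj_y (by rw [hn4]; exact (Bm u hu0 hun).2.2.1)).symm
          · obtain ⟨e1, e2⟩ := hint u hu0 hun
            obtain ⟨e3, e4⟩ := hint v hv0 hvn
            rw [hrm u hu0 hun, hrm v hv0 hvn]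
            exact M3 u v e1 e2 e3 e4 hne
  · -- adjacency iff contact
    intro u v hne
    rcases eq_or_ne u i0 with rfl | hu0
    · rcases eq_or_ne v jn with rfl | hvn
      · rw [hr0, hrn]
        exact iff_of_true hA hC0n
      · rcases eq_or_ne v i0 with rfl | hv0
        · exact absurd rfl hne
        · rw [hr0, hrm v hv0 hvn]
          exact key0 v hv0 hvn
    · rcases eq_or_ne u jn with rfl | hun
      · rcases eq_or_ne v i0 with rfl | hv0
        · rw [hr0, hrn, G.adj_comm, Rect.contact_comm]
          exact iff_of_true hA hC0n
        · rcases eq_or_ne v jn with rfl | hvn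
          · exact absurd rfl hne
          · rw [hrn, hrm v hv0 hvn]
            exact keyn v hv0 hvn
      · rcases eq_or_ne v i0 with rfl | hv0
        · rw [hr0, hrm u hu0 hun, G.adj_comm, Rect.contact_comm]
          exact key0 u hu0 hun
        · rcases eq_or_ne v jn with rfl | hvn
          · rw [hrn, hrm u hu0 hun, G.adj_comm, Rect.contact_comm]
            exact keyn u hu0 hun
          · obtain ⟨e1, e2⟩ := hint u hu0 hun
            obtain ⟨e3, e4⟩ := hint v hv0 hvn
            rw [hrm u hu0 hun, hrm v hv0 hvn]
            exact M4 u v e1 e2 e3 e4 hne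
  · -- vertex 0 leftmost
    intro v
    show (ρ i0).xlo ≤ (ρ v).xlo
    rw [hr0]
    rcases eq_or_ne v i0 with rfl | hv0
    · rw [hr0]
    · rcases eq_or_ne v jn with rfl | hvn
      · rw [hrn]; linarith [h01, hn1, hx1]
      · rw [hrm v hv0 hvn]
        linarith [h01, (Bm v hv0 hvn).1, hx1]
  · -- vertex n-1 bottommost
    intro v hv
    show (ρ jn).ylo ≤ (ρ v).ylo
    rw [hrn]
    rcases eq_or_ne v jn with rfl | hvn
    · rw [hrn]
    · have hv0 : v ≠ i0 := hv
      rw [hrm v hv0 hvn]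
      linarith [hn3, (Bm v hv0 hvn).2.2.1, hy1]
  · -- exposed corners
    intro v u hne
    rcases eq_or_ne v i0 with rfl | hv0
    · rcases eq_or_ne u jn with rfl | hun
      · rw [hr0, hrn]
        intro hmem
        simp only [Rect.toSet, Set.mem_setOf_eq] at hmem
        obtain ⟨m1, m2, m3, m4⟩ := hmem
        linarith [h02, h04, hn4, hH0]
      · rcases eq_or_ne u i0 with rfl | hu0
        · exact absurd rfl hne
        · rw [hr0, hrm u hu0 hun]
          intro hmem
          simp only [Rect.toSet, Set.mem_setOf_eq] at hmem
          obtain ⟨m1, m2, m3, m4⟩ := hmem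
          linarith [h02, h04, (Bm u hu0 hun).2.2.2]
    · rcases eq_or_ne v jn with rfl | hvn
      · rcases eq_or_ne u i0 with rfl | hu0
        · rw [hr0, hrn]
          intro hmem
          simp only [Rect.toSet, Set.mem_setOf_eq] at hmem
          obtain ⟨m1, m2, m3, m4⟩ := hmem
          linarith [hn2, h02]
        · rcases eq_or_ne u jn with rfl | hun
          · exact absurd rfl hne
          · rw [hrn, hrm u hu0 hun]
            intro hmem
            simp only [Rect.toSet, Set.mem_setOf_eq] at hmem
            obtain ⟨m1, m2, m3, m4⟩ := hmem
            linarith [hn2, (Bm u hu0 hun).2.1]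
      · rcases eq_or_ne u i0 with rfl | hu0
        · rw [hr0, hrm v hv0 hvn]
          intro hmem
          simp only [Rect.toSet, Set.mem_setOf_eq] at hmem
          obtain ⟨m1, m2, m3, m4⟩ := hmem
          linarith [h02, (Bm v hv0 hvn).1, (ρm v).hx]
        · rcases eq_or_ne u jn with rfl | hun
          · rw [hrn, hrm v hv0 hvn]
            intro hmem
            simp only [Rect.toSet, Set.mem_setOf_eq] at hmem
            obtain ⟨m1, m2, m3, m4⟩ := hmem
            linarith [hn4, (Bm v hv0 hvn).2.2.1, (ρm v).hy]
          · obtain ⟨e1, e2⟩ := hint u hu0 hun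
            obtain ⟨e3, e4⟩ := hint v hv0 hvn
            rw [hrm u hu0 hun, hrm v hv0 hvn]
            exact M7 u v e1 e2 e3 e4 hne
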